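/- Theorem 3(ii) (quantitative form): In the setting of Theorem 3(i), let n ≥ 1 be an integer. If λ ≠ λ̄ and |λ − λ̄|/(2δ) ≥ √(ln(2·(n₂ − K)) + 2·ln n), then the probability of a correct Top-K de-anonymization of u is at least 1 − 1/n²; that is, P(#{v ∈ V : Y_v ≤ X} ≤ K − 1) ≥ 1 − 1/n² when λ < λ̄, and P(#{v ∈ V : Y_v ≥ X} ≤ K − 1) ≥ 1 − 1/n² when λ > λ̄. -/

import Mathlib

open MeasureTheory

lemma upper_tail_aux {Ω : Type*} [MeasurableSpace Ω] (P : Measure Ω) [IsProbabilityMeasure P]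
    {X : Ω → ℝ} (hXm : Measurable X) {a b lam s : ℝ}
    (hr : ∀ ω, X ω ∈ Set.Icc a b) (hab : a < b)
    (hlam : lam = ∫ ω, X ω ∂P) (hs : 0 < s) :
    (P {ω | lam + s ≤ X ω}).toReal ≤ Real.exp (-(s / (b - a)) ^ 2) := by
  have hint : Integrable X P := by
    refine (integrable_const (max |a| |b|)).mono' hXm.aestronglyMeasurable ?_
    filter_upwards with ω
    have h1 := (hr ω).1
    have h2 := (hr ω).2
    rw [Real.norm_eq_abs, abs_le]
    constructor
    · calc -max |a| |b| ≤ -|a| := by simp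
        _ ≤ a := neg_abs_le a
        _ ≤ X ω := h1
    · calc X ω ≤ b := h2
        _ ≤ |b| := le_abs_self b
        _ ≤ max |a| |b| := le_max_right _ _
  have halam : a ≤ lam := by
    rw [hlam]
    have := integral_mono (integrable_const a) hint (fun ω => (hr ω).1)
    simpa using this
  by_cases hc : lam + s ≤ b
  · set A := {ω | lam + s ≤ X ω} with hA
    have hAm : MeasurableSet A := measurableSet_le measurable_const hXm
    set p := (P A).toReal with hp
    have hp0 : 0 ≤ p := ENNReal.toReal_nonneg
    have hp1 : p ≤ 1 := by
      rw [hp]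
      exact ENNReal.toReal_le_of_le_ofReal zero_le_one (by simpa using prob_le_one)
    have hkey : p * (lam + s - a) ≤ lam - a := by
      have h1 : ∫ ω in A, (lam + s - a) ∂P ≤ ∫ ω in A, (X ω - a) ∂P := by
        refine setIntegral_mono_on (integrable_const _).integrableOn
          (hint.sub (integrable_const a)).integrableOn hAm ?_
        intro ω hω
        have : lam + s ≤ X ω := hω
        linarith
      have h2 : ∫ ω in A, (X ω - a) ∂P ≤ ∫ ω, (X ω - a) ∂P := by
        refine setIntegral_le_integral (hint.sub (integrable_const a)) ?_
        filter_upwards with ω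
        have := (hr ω).1
        simp only [Pi.zero_apply]
        linarith
      have h3 : ∫ ω, (X ω - a) ∂P = lam - a := by
        rw [integral_sub hint (integrable_const a), ← hlam]
        simp
      have h4 : ∫ ω in A, (lam + s - a) ∂P = p * (lam + s - a) := by
        rw [setIntegral_const, smul_eq_mul]
        rfl
      linarith
    have hba : 0 < b - a := by linarith
    have hsb : s ≤ b - a := by linarith
    have hgoal : p ≤ 1 - s / (b - a) := by
      have h7 : p * (b - a) ≤ b - a - s := by nlinarith
      have h8 : p ≤ (b - a - s) / (b - a) := by rw [le_div_iff₀ hba]; exact h7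
      calc p ≤ (b - a - s) / (b - a) := h8
        _ = 1 - s / (b - a) := by field_simp
    calc p ≤ 1 - s / (b - a) := hgoal
      _ ≤ Real.exp (-(s / (b - a)) ^ 2) := by
        set x := s / (b - a) with hx
        have hx0 : 0 < x := div_pos hs hba
        have hx1 : x ≤ 1 := by rw [hx, div_le_one hba]; exact hsb
        have h5 : 1 - x ≤ 1 - x ^ 2 := by nlinarith
        have h6 : 1 - x ^ 2 ≤ Real.exp (-x ^ 2) := by
          have := Real.add_one_le_exp (-x ^ 2)
          linarith
        linarith
  · have hempty : {ω | lam + s ≤ X ω} = ∅ := by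
      ext ω
      simp only [Set.mem_setOf_eq, Set.mem_empty_iff_false, iff_false, not_le]
      have := (hr ω).2
      linarith [not_le.mp hc]
    rw [hempty]
    simp
    positivity

lemma lower_tail_aux {Ω : Type*} [MeasurableSpace Ω] (P : Measure Ω) [IsProbabilityMeasure P]
    {X : Ω → ℝ} (hXm : Measurable X) {a b lam s : ℝ}
    (hr : ∀ ω, X ω ∈ Set.Icc a b) (hab : a < b)
    (hlam : lam = ∫ ω, X ω ∂P) (hs : 0 < s) :
    (P {ω | X ω ≤ lam - s}).toReal ≤ Real.exp (-(s / (b - a)) ^ 2) := by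
  have h := upper_tail_aux P (X := fun ω => -X ω) hXm.neg
    (a := -b) (b := -a) (lam := -lam) (s := s)
    (fun ω => ⟨neg_le_neg (hr ω).2, neg_le_neg (hr ω).1⟩) (by linarith)
    (by rw [hlam, integral_neg]) hs
  have hset : {ω | -lam + s ≤ -X ω} = {ω | X ω ≤ lam - s} := by
    ext ω; constructor <;> (intro h'; simp only [Set.mem_setOf_eq] at *; linarith)
  rw [hset] at h
  have : -a - -b = b - a := by ring
  rwa [this] at h

lemma count_aux {Ω : Type*} [MeasurableSpace Ω] {V : Type*} [Fintype V] (P : Measure Ω)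
    (A : V → Set Ω) (hA : ∀ v, MeasurableSet (A v)) (K : ℕ) :
    MeasurableSet {ω | K ≤ {v | ω ∈ A v}.ncard} ∧
    (K : ENNReal) * P {ω | K ≤ {v | ω ∈ A v}.ncard} ≤ ∑ v, P (A v) := by
  classical
  set f : Ω → ENNReal := fun ω => ∑ v, (A v).indicator 1 ω with hf
  have hfm : Measurable f :=
    Finset.measurable_sum _ (fun v _ => measurable_const.indicator (hA v))
  have hfe : ∀ ω, f ω = (({v | ω ∈ A v}.ncard : ℕ) : ENNReal) := by
    intro ω
    have h1 : {v | ω ∈ A v} = ↑(Finset.univ.filter fun v => ω ∈ A v) := by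
      ext v; simp
    rw [h1, Set.ncard_coe_finset, ← Finset.sum_boole]
    simp [hf, Set.indicator_apply]
  have hseteq : {ω | K ≤ {v | ω ∈ A v}.ncard} = {ω | (K : ENNReal) ≤ f ω} := by
    ext ω
    simp only [Set.mem_setOf_eq, hfe ω, Nat.cast_le]
  constructor
  · rw [hseteq]; exact measurableSet_le measurable_const hfm
  · rw [hseteq]
    calc (K : ENNReal) * P {ω | (K : ENNReal) ≤ f ω}
        ≤ ∫⁻ ω, f ω ∂P := mul_meas_ge_le_lintegral hfm _
      _ = ∑ v, P (A v) := by
          have h := lintegral_finset_sum (μ := P) Finset.univ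
            (f := fun v ω => (A v).indicator 1 ω)
            (fun v _ => measurable_const.indicator (hA v))
          calc ∫⁻ ω, f ω ∂P = ∑ v, ∫⁻ ω, (A v).indicator 1 ω ∂P := h
            _ = ∑ v, P (A v) :=
                Finset.sum_congr rfl (fun v _ => lintegral_indicator_one (hA v))

set_option maxHeartbeats 2000000 in
lemma master_case {Ω : Type*} [MeasurableSpace Ω] (P : Measure Ω) [IsProbabilityMeasure P]
    {V : Type*} [Fintype V]
    (n₂ K : ℕ) (hK : 1 ≤ K) (hKn₂ : K < n₂)
    (hV : Fintype.card V = n₂ - 1)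
    (X : Ω → ℝ) (Y : V → Ω → ℝ)
    (hXm : Measurable X) (hYm : ∀ v, Measurable (Y v))
    (a b ab bb lam lamb δ : ℝ)
    (hXr : ∀ ω, X ω ∈ Set.Icc a b)
    (hYr : ∀ v ω, Y v ω ∈ Set.Icc ab bb)
    (hlam : lam = ∫ ω, X ω ∂P)
    (hlamb : ∀ v, lamb = ∫ ω, Y v ω ∂P)
    (hab : a < b) (hab' : ab < bb)
    (hbδ : b - a ≤ δ) (hbbδ : bb - ab ≤ δ) (hδpos : 0 < δ)
    (n : ℕ) (hn : 1 ≤ n)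
    (hlt : lam < lamb)
    (hgap : Real.sqrt (Real.log (2 * ((n₂ : ℝ) - K)) + 2 * Real.log n) ≤
      (lamb - lam) / (2 * δ)) :
    1 - 1 / (n : ℝ) ^ 2 ≤
      (P {ω | {v : V | Y v ω ≤ X ω}.ncard ≤ K - 1}).toReal := by
  classical
  set s : ℝ := (lamb - lam) / 2 with hsdef
  have hs : 0 < s := by rw [hsdef]; linarith
  set L : ℝ := Real.log (2 * ((n₂ : ℝ) - K)) + 2 * Real.log n with hLdef
  have hm1 : (1 : ℝ) ≤ (n₂ : ℝ) - K := by
    have : (K : ℝ) + 1 ≤ (n₂ : ℝ) := by exact_mod_cast hKn₂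
    linarith
  have hn1 : (1 : ℝ) ≤ (n : ℝ) := by exact_mod_cast hn
  have hL0 : 0 ≤ L := by
    have h1 : 0 ≤ Real.log (2 * ((n₂ : ℝ) - K)) := Real.log_nonneg (by linarith)
    have h2 : 0 ≤ Real.log n := Real.log_nonneg hn1
    rw [hLdef]; linarith
  have hsd : Real.sqrt L ≤ s / δ := by
    have : (lamb - lam) / (2 * δ) = s / δ := by
      rw [hsdef]; field_simp
    rw [← this]; exact hgap
  have hLle : L ≤ (s / δ) ^ 2 := by
    calc L = Real.sqrt L ^ 2 := (Real.sq_sqrt hL0).symm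
      _ ≤ (s / δ) ^ 2 := by
          have := Real.sqrt_nonneg L
          nlinarith
  set E : ℝ := Real.exp (-L) with hEdef
  have hEeq : E = 1 / (2 * ((n₂ : ℝ) - K) * (n : ℝ) ^ 2) := by
    rw [hEdef, hLdef, neg_add, Real.exp_add]
    rw [Real.exp_neg, Real.exp_log (by linarith : (0:ℝ) < 2 * ((n₂ : ℝ) - K))]
    have h2 : (2 : ℝ) * Real.log n = Real.log ((n : ℝ) ^ 2) := by
      rw [Real.log_pow]; push_cast; ring
    rw [Real.exp_neg, h2, Real.exp_log (by positivity)]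
    field_simp
  -- tail bound machinery
  have hexp_le : ∀ c : ℝ, 0 < c → c ≤ δ → Real.exp (-(s / c) ^ 2) ≤ E := by
    intro c hc hcδ
    rw [hEdef]
    apply Real.exp_le_exp.mpr
    have h1 : s / δ ≤ s / c := by
      apply div_le_div_of_nonneg_left (le_of_lt hs) hc hcδ
    have h2 : 0 ≤ s / δ := by positivity
    nlinarith
  set t₀ : ℝ := lam + s with ht₀
  have ht₀' : t₀ = lamb - s := by rw [ht₀, hsdef]; ring
  set A0 : Set Ω := {ω | t₀ ≤ X ω} with hA0
  have hA0m : MeasurableSet A0 := measurableSet_le measurable_const hXm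
  have htailX : (P A0).toReal ≤ E := by
    calc (P A0).toReal ≤ Real.exp (-(s / (b - a)) ^ 2) :=
          upper_tail_aux P hXm hXr hab hlam hs
      _ ≤ E := hexp_le _ (by linarith) hbδ
  set A : V → Set Ω := fun v => {ω | Y v ω ≤ t₀} with hAdef
  have hAm : ∀ v, MeasurableSet (A v) := fun v => measurableSet_le (hYm v) measurable_const
  have htailY : ∀ v, (P (A v)).toReal ≤ E := by
    intro v
    have hset : A v = {ω | Y v ω ≤ lamb - s} := by rw [hAdef, ht₀']
    rw [hset]
    calc (P {ω | Y v ω ≤ lamb - s}).toReal ≤ Real.exp (-(s / (bb - ab)) ^ 2) :=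
          lower_tail_aux P (hYm v) (hYr v) hab' (hlamb v) hs
      _ ≤ E := hexp_le _ (by linarith) hbbδ
  obtain ⟨hB2m, hcount⟩ := count_aux P A hAm K
  set B2 : Set Ω := {ω | K ≤ {v | ω ∈ A v}.ncard} with hB2
  -- bound on P B2
  have hsum_ne_top : (∑ v, P (A v)) ≠ ⊤ :=
    (ENNReal.sum_lt_top.mpr fun v _ => measure_lt_top P _).ne
  have hB2bound : (K : ℝ) * (P B2).toReal ≤ ((n₂ : ℝ) - 1) * E := by
    have h1 : ((K : ENNReal) * P B2).toReal ≤ (∑ v, P (A v)).toReal :=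
      ENNReal.toReal_mono hsum_ne_top hcount
    rw [ENNReal.toReal_mul, ENNReal.toReal_natCast,
      ENNReal.toReal_sum (fun v _ => (measure_lt_top P _).ne)] at h1
    have h2 : ∑ v, (P (A v)).toReal ≤ ((n₂ : ℝ) - 1) * E := by
      calc ∑ v, (P (A v)).toReal ≤ ∑ _v : V, E := Finset.sum_le_sum fun v _ => htailY v
        _ = (Fintype.card V : ℝ) * E := by
            rw [Finset.sum_const, nsmul_eq_mul]; rfl
        _ = ((n₂ : ℝ) - 1) * E := by
            rw [hV, Nat.cast_sub (by omega : 1 ≤ n₂)]; norm_num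
    linarith
  -- probability of the union
  have hunion : (P (A0 ∪ B2)).toReal ≤ (P A0).toReal + (P B2).toReal := by
    have h1 : (P (A0 ∪ B2)).toReal ≤ (P A0 + P B2).toReal :=
      ENNReal.toReal_mono (by
        exact ENNReal.add_ne_top.mpr ⟨(measure_lt_top P _).ne, (measure_lt_top P _).ne⟩)
        (measure_union_le A0 B2)
    rwa [ENNReal.toReal_add (measure_lt_top P _).ne (measure_lt_top P _).ne] at h1
  -- final arithmetic bound
  have hK1 : (1 : ℝ) ≤ (K : ℝ) := by exact_mod_cast hK
  have hfinal : (P A0).toReal + (P B2).toReal ≤ 1 / (n : ℝ) ^ 2 := by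
    have hE0 : 0 < E := Real.exp_pos _
    have hPB2 : (P B2).toReal ≤ ((n₂ : ℝ) - 1) * E / K := by
      rw [le_div_iff₀ (by linarith : (0:ℝ) < (K:ℝ))]
      linarith [hB2bound]
    have hn₂K : (n₂ : ℝ) = ((n₂ : ℝ) - K) + K := by ring
    have hkey : (K : ℝ) + (n₂ : ℝ) - 1 ≤ 2 * K * ((n₂ : ℝ) - K) := by
      nlinarith [hm1, hK1]
    have hchain : E + ((n₂ : ℝ) - 1) * E / K ≤ 1 / (n : ℝ) ^ 2 := by
      have hmpos : (0:ℝ) < (n₂ : ℝ) - K := by linarith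
      have hKpos : (0:ℝ) < (K : ℝ) := by linarith
      have key2 : ((n₂ : ℝ) - 1) / (K : ℝ) ≤ 2 * ((n₂ : ℝ) - K) - 1 := by
        rw [div_le_iff₀ hKpos]; nlinarith [hkey]
      have hE2m : E * (2 * ((n₂ : ℝ) - K)) = 1 / (n : ℝ) ^ 2 := by
        rw [hEeq]; field_simp
      calc E + ((n₂ : ℝ) - 1) * E / K = E * (1 + ((n₂ : ℝ) - 1) / K) := by ring
        _ ≤ E * (2 * ((n₂ : ℝ) - K)) := by
            apply mul_le_mul_of_nonneg_left ?_ hE0.le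
            linarith [key2]
        _ = 1 / (n : ℝ) ^ 2 := hE2m
    linarith [htailX, hPB2]
  -- inclusion
  have hsubset : (A0 ∪ B2)ᶜ ⊆ {ω | {v : V | Y v ω ≤ X ω}.ncard ≤ K - 1} := by
    intro ω hω
    simp only [Set.mem_compl_iff, Set.mem_union, not_or] at hω
    obtain ⟨h0, h2⟩ := hω
    have hX : X ω < t₀ := not_le.mp h0
    have hss : {v : V | Y v ω ≤ X ω} ⊆ {v : V | ω ∈ A v} := by
      intro v hv
      simp only [Set.mem_setOf_eq] at *
      show Y v ω ≤ t₀
      linarith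
    have hcard : {v : V | Y v ω ≤ X ω}.ncard ≤ {v : V | ω ∈ A v}.ncard :=
      Set.ncard_le_ncard hss (Set.toFinite _)
    have h2' : {v : V | ω ∈ A v}.ncard < K := not_le.mp h2
    simp only [Set.mem_setOf_eq]
    omega
  calc 1 - 1 / (n : ℝ) ^ 2
      ≤ 1 - (P (A0 ∪ B2)).toReal := by linarith [hunion, hfinal]
    _ = (P (A0 ∪ B2)ᶜ).toReal := by
        rw [prob_compl_eq_one_sub (hA0m.union hB2m),
          ENNReal.toReal_sub_of_le prob_le_one ENNReal.one_ne_top]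
        simp
    _ ≤ (P {ω | {v : V | Y v ω ≤ X ω}.ncard ≤ K - 1}).toReal :=
        ENNReal.toReal_mono (measure_lt_top P _).ne (measure_mono hsubset)

/-- Theorem 3(ii) (quantitative form): in the setting of Theorem 3(i), if
`λ ≠ λ̄` and `|λ - λ̄|/(2δ) ≥ √(ln(2(n₂ - K)) + 2 ln n)`, then the
probability of a correct Top-K de-anonymization of `u` is at least
`1 - 1/n²`. -/
theorem theorem3_topK_quantitative
    {Ω : Type*} [MeasurableSpace Ω] (P : Measure Ω) [IsProbabilityMeasure P]
    {V : Type*} [Fintype V]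
    (n₂ K : ℕ) (hn₂ : 2 ≤ n₂) (hK : 1 ≤ K) (hKn₂ : K < n₂)
    (hV : Fintype.card V = n₂ - 1)
    (X : Ω → ℝ) (Y : V → Ω → ℝ)
    (hXm : Measurable X) (hYm : ∀ v, Measurable (Y v))
    (θl θu θbl θbu lam lamb θ θb δ : ℝ)
    (hXr : ∀ ω, X ω ∈ Set.Icc θl θu)
    (hYr : ∀ v ω, Y v ω ∈ Set.Icc θbl θbu)
    (hlam : lam = ∫ ω, X ω ∂P)
    (hlamb : ∀ v, lamb = ∫ ω, Y v ω ∂P)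
    (hθ : θ = θu - θl) (hθb : θb = θbu - θbl) (hδ : δ = max θ θb)
    (hθpos : 0 < θ) (hθbpos : 0 < θb)
    (n : ℕ) (hn : 1 ≤ n)
    (hne : lam ≠ lamb)
    (hgap : Real.sqrt (Real.log (2 * ((n₂ : ℝ) - K)) + 2 * Real.log n) ≤
      |lam - lamb| / (2 * δ)) :
    (lam < lamb →
      1 - 1 / (n : ℝ) ^ 2 ≤
        (P {ω | {v : V | Y v ω ≤ X ω}.ncard ≤ K - 1}).toReal) ∧
    (lamb < lam →
      1 - 1 / (n : ℝ) ^ 2 ≤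
        (P {ω | {v : V | X ω ≤ Y v ω}.ncard ≤ K - 1}).toReal) := by
  have hδθ : θ ≤ δ := hδ ▸ le_max_left _ _
  have hδθb : θb ≤ δ := hδ ▸ le_max_right _ _
  have hδpos : 0 < δ := lt_of_lt_of_le hθpos hδθ
  constructor
  · intro hlt
    have habs : |lam - lamb| = lamb - lam := by
      rw [abs_sub_comm, abs_of_pos (by linarith)]
    exact master_case P n₂ K hK hKn₂ hV X Y hXm hYm θl θu θbl θbu lam lamb δ
      hXr hYr hlam hlamb (by linarith) (by linarith) (by linarith) (by linarith)
      hδpos n hn hlt (by rw [← habs]; exact hgap)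
  · intro hlt
    have habs : |lam - lamb| = lam - lamb := abs_of_pos (by linarith)
    have h2 : 1 - 1 / (n : ℝ) ^ 2 ≤
        (P {ω | {v : V | -Y v ω ≤ -X ω}.ncard ≤ K - 1}).toReal :=
      master_case P n₂ K hK hKn₂ hV (fun ω => -X ω) (fun v ω => -Y v ω)
        hXm.neg (fun v => (hYm v).neg) (-θu) (-θl) (-θbu) (-θbl) (-lam) (-lamb) δ
        (fun ω => ⟨neg_le_neg (hXr ω).2, neg_le_neg (hXr ω).1⟩)
        (fun v ω => ⟨neg_le_neg (hYr v ω).2, neg_le_neg (hYr v ω).1⟩)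
        (by rw [hlam, integral_neg])
        (fun v => by rw [hlamb v, integral_neg])
        (by linarith) (by linarith) (by linarith) (by linarith)
        hδpos n hn (by linarith)
        (by rw [show -lamb - -lam = |lam - lamb| by rw [habs]; ring]; exact hgap)
    have hseteq : {ω | {v : V | -Y v ω ≤ -X ω}.ncard ≤ K - 1}
        = {ω | {v : V | X ω ≤ Y v ω}.ncard ≤ K - 1} := by
      ext ω
      simp only [Set.mem_setOf_eq, neg_le_neg_iff]
    rwa [hseteq] at h2
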